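/- arXiv:0902.3592 — 3 statements merged into one kernel-verified Lean document; each statement's English description precedes it below -/
import Mathlib

section
/- Let D be an integral domain. Then the following are equivalent: (i) for every nonzero finitely generated fractional ideal F of D, (F^v : F^v) = D; (ii) for every nonzero finitely generated fractional ideal F of D, (F·F⁻¹)⁻¹ = D (i.e., D is a v-domain). -/
open FractionalIdeal Pointwise

variable {D K : Type*} [CommRing D] [IsDomain D] [Field K] [Algebra D K] [IsFractionRing D K]

/-- The `v`-operation: `A ↦ (A⁻¹)⁻¹`, where `A⁻¹ = (D : A) = 1 / A`. -/
noncomputable def vop (A : FractionalIdeal (nonZeroDivisors D) K) :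
    FractionalIdeal (nonZeroDivisors D) K := 1 / (1 / A)

/-- `A` is `v`-invertible if `(A·A⁻¹)^v = D`. -/
noncomputable def IsVInvertible (A : FractionalIdeal (nonZeroDivisors D) K) : Prop :=
  vop (A * (1 / A)) = 1

lemma aux_one_div_ne_zero {A : FractionalIdeal (nonZeroDivisors D) K} (hA : A ≠ 0) :
    (1 / A : FractionalIdeal (nonZeroDivisors D) K) ≠ 0 := by
  intro h0
  have hmem : algebraMap D K (A.den : D) ∈ (1 / A : FractionalIdeal (nonZeroDivisors D) K) := by
    rw [mem_div_iff_of_ne_zero hA]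
    intro y hy
    have h1 : A.den • y ∈ A.den • (A : Submodule D K) :=
      Submodule.smul_mem_pointwise_smul y A.den _ hy
    rw [A.den_mul_self_eq_num] at h1
    obtain ⟨n, -, hn'⟩ := h1
    rw [Algebra.linearMap_apply] at hn'
    rw [mem_one_iff]
    exact ⟨n, by rw [hn', Submonoid.smul_def, Algebra.smul_def]⟩
  rw [h0, mem_zero_iff] at hmem
  exact IsFractionRing.to_map_ne_zero_of_mem_nonZeroDivisors A.den.2 hmem

lemma aux_mul_ne_zero {A B : FractionalIdeal (nonZeroDivisors D) K} (hA : A ≠ 0) (hB : B ≠ 0) :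
    A * B ≠ 0 := by
  obtain ⟨x, hx, hx0⟩ : ∃ x ∈ A, x ≠ (0 : K) := by
    by_contra h; push_neg at h; exact hA (eq_zero_iff.mpr h)
  obtain ⟨y, hy, hy0⟩ : ∃ y ∈ B, y ≠ (0 : K) := by
    by_contra h; push_neg at h; exact hB (eq_zero_iff.mpr h)
  intro h0
  have := mul_mem_mul hx hy
  rw [h0, mem_zero_iff] at this
  exact mul_ne_zero hx0 hy0 this

lemma aux_self_le_vv {A : FractionalIdeal (nonZeroDivisors D) K} (hA : A ≠ 0) :
    A ≤ 1 / (1 / A) := by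
  rw [le_div_iff_mul_le (aux_one_div_ne_zero hA)]
  exact mul_one_div_le_one

lemma aux_one_div_antimono {A B : FractionalIdeal (nonZeroDivisors D) K} (hA : A ≠ 0)
    (hAB : A ≤ B) : 1 / B ≤ 1 / A := by
  rw [le_div_iff_mul_le hA]
  calc (1 / B) * A ≤ (1 / B) * B := mul_right_mono hAB
    _ ≤ 1 := by rw [mul_comm]; exact mul_one_div_le_one

lemma aux_vvv {F : FractionalIdeal (nonZeroDivisors D) K} (hF : F ≠ 0) :
    1 / (1 / (1 / F)) = 1 / F :=
  le_antisymm (aux_one_div_antimono hF (aux_self_le_vv hF))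
    (aux_self_le_vv (aux_one_div_ne_zero hF))

lemma aux_div_self_le {A : FractionalIdeal (nonZeroDivisors D) K} (hA : A ≠ 0)
    (h1A : (1 / A : FractionalIdeal (nonZeroDivisors D) K) ≠ 0) :
    A / A ≤ (1 / A) / (1 / A) := by
  rw [le_div_iff_mul_le h1A, le_div_iff_mul_le hA, mul_assoc, mul_comm (1 / A) A]
  calc A / A * (A * (1 / A)) = (A / A * A) * (1 / A) := by rw [mul_assoc]
    _ ≤ A * (1 / A) := mul_left_mono ((le_div_iff_mul_le hA).mp le_rfl)
    _ ≤ 1 := mul_one_div_le_one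

lemma aux_key {F : FractionalIdeal (nonZeroDivisors D) K} (hF : F ≠ 0) :
    1 / (F * (1 / F)) = vop F / vop F := by
  set G : FractionalIdeal (nonZeroDivisors D) K := 1 / F with hG_def
  have hG : G ≠ 0 := aux_one_div_ne_zero hF
  have h1G : (1 / G : FractionalIdeal (nonZeroDivisors D) K) ≠ 0 := aux_one_div_ne_zero hG
  have hFG : F * G ≠ 0 := aux_mul_ne_zero hF hG
  have hvv : 1 / (1 / G) = G := aux_vvv hF
  have stepA : 1 / (F * G) = G / G := by
    apply le_antisymm
    · rw [le_div_iff_mul_le hG, hG_def, le_div_iff_mul_le hF, mul_assoc, mul_comm (1 / F) F,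
        ← hG_def]
      calc 1 / (F * G) * (F * G) = (F * G) * (1 / (F * G)) := by rw [mul_comm]
        _ ≤ 1 := mul_one_div_le_one
    · rw [le_div_iff_mul_le hFG]
      calc G / G * (F * G) = (G / G * G) * F := by ring
        _ ≤ G * F := mul_left_mono ((le_div_iff_mul_le hG).mp le_rfl)
        _ = F * (1 / F) := by rw [mul_comm, hG_def]
        _ ≤ 1 := mul_one_div_le_one
  have stepB : G / G = (1 / G) / (1 / G) := by
    apply le_antisymm (aux_div_self_le hG h1G)
    have hvvne : (1 / (1 / G) : FractionalIdeal (nonZeroDivisors D) K) ≠ 0 := by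
      rw [hvv]; exact hG
    have := aux_div_self_le h1G hvvne
    rwa [hvv] at this
  rw [stepA, stepB]
  rfl

/-- `(F^v : F^v) = D` for all nonzero f.g. fractional ideals iff `D` is a `v`-domain. -/
theorem vcolon_iff_vDomain :
    (∀ F : FractionalIdeal (nonZeroDivisors D) K, F ≠ 0 → (F : Submodule D K).FG →
        vop F / vop F = 1) ↔
      (∀ F : FractionalIdeal (nonZeroDivisors D) K, F ≠ 0 → (F : Submodule D K).FG →
        1 / (F * (1 / F)) = 1) := by
  constructor
  · intro h F hF hFG
    rw [aux_key hF]
    exact h F hF hFG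
  · intro h F hF hFG
    rw [← aux_key hF]
    exact h F hF hFG
end

section
/- Let D be an integral domain. Then D is a v-domain if and only if every nonzero fractional ideal of D generated by two elements is v-invertible. -/
open FractionalIdeal

set_option linter.unusedSectionVars false

variable {D K : Type*} [CommRing D] [IsDomain D] [Field K] [Algebra D K] [IsFractionRing D K]

private lemma fi_mul_ne_zero {I J : FractionalIdeal (nonZeroDivisors D) K}
    (hI : I ≠ 0) (hJ : J ≠ 0) : I * J ≠ 0 := by
  rw [ne_eq, FractionalIdeal.eq_zero_iff] at *
  push_neg at *
  obtain ⟨x, hx, hx0⟩ := hI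
  obtain ⟨y, hy, hy0⟩ := hJ
  exact ⟨x * y, FractionalIdeal.mul_mem_mul hx hy, mul_ne_zero hx0 hy0⟩

private lemma fi_one_div_ne_zero {A : FractionalIdeal (nonZeroDivisors D) K}
    (hA : A ≠ 0) : 1 / A ≠ 0 := by
  obtain ⟨a, haS, ha⟩ := A.isFractional
  intro h0
  have hmem : algebraMap D K a ∈ (1 / A : FractionalIdeal (nonZeroDivisors D) K) := by
    rw [FractionalIdeal.mem_div_iff_of_ne_zero hA]
    intro y hy
    obtain ⟨c, hc⟩ := ha y hy
    exact (FractionalIdeal.mem_one_iff _).mpr ⟨c, by rw [hc, Algebra.smul_def]⟩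
  rw [h0, FractionalIdeal.mem_zero_iff] at hmem
  have : a ≠ 0 := nonZeroDivisors.ne_zero haS
  exact this ((map_eq_zero_iff _ (IsFractionRing.injective D K)).mp hmem)

private lemma fi_one_div_le_one_div {B C : FractionalIdeal (nonZeroDivisors D) K}
    (hB : B ≠ 0) (h : B ≤ C) : 1 / C ≤ 1 / B := by
  rw [FractionalIdeal.le_div_iff_mul_le hB]
  calc (1 / C) * B ≤ (1 / C) * C := mul_le_mul_right h _
    _ = C * (1 / C) := mul_comm _ _
    _ ≤ 1 := FractionalIdeal.mul_one_div_le_one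

private lemma fi_le_one_div_one_div {X : FractionalIdeal (nonZeroDivisors D) K}
    (hX : X ≠ 0) : X ≤ 1 / (1 / X) := by
  rw [FractionalIdeal.le_div_iff_mul_le (fi_one_div_ne_zero hX)]
  exact FractionalIdeal.mul_one_div_le_one

private lemma fi_one_div_one_div_one_div {X : FractionalIdeal (nonZeroDivisors D) K}
    (hX : X ≠ 0) : 1 / (1 / (1 / X)) = 1 / X :=
  le_antisymm (fi_one_div_le_one_div hX (fi_le_one_div_one_div hX))
    (fi_le_one_div_one_div (fi_one_div_ne_zero hX))

private lemma fi_one_le_one_div {G : FractionalIdeal (nonZeroDivisors D) K}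
    (hG : G ≠ 0) (h : G ≤ 1) : 1 ≤ 1 / G := by
  rw [FractionalIdeal.le_div_iff_mul_le hG, one_mul]; exact h

private lemma vinv_iff (A : FractionalIdeal (nonZeroDivisors D) K) :
    IsVInvertible A ↔ 1 / (A * (1 / A)) = 1 := by
  by_cases hA : A = 0
  · subst hA
    simp [IsVInvertible, vop]
  · have hB : A * (1 / A) ≠ 0 := fi_mul_ne_zero hA (fi_one_div_ne_zero hA)
    unfold IsVInvertible vop
    constructor
    · intro h
      calc 1 / (A * (1 / A)) = 1 / (1 / (1 / (A * (1 / A)))) :=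
            (fi_one_div_one_div_one_div hB).symm
        _ = 1 / 1 := by rw [h]
        _ = 1 := FractionalIdeal.div_one
    · intro h
      rw [h]
      exact FractionalIdeal.div_one

/-- If `B*C` is v-invertible (in `1/`-form) and `B, C ≠ 0` then `B` is v-invertible. -/
private lemma vinv_of_factor {B C : FractionalIdeal (nonZeroDivisors D) K}
    (hB : B ≠ 0) (hC : C ≠ 0) (h : 1 / (B * C * (1 / (B * C))) = 1) :
    1 / (B * (1 / B)) = 1 := by
  have hBC : B * C ≠ 0 := fi_mul_ne_zero hB hC
  have hkey : B * C * (1 / (B * C)) ≤ B * (1 / B) := by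
    rw [mul_assoc]
    refine mul_le_mul_right ?_ B
    rw [FractionalIdeal.le_div_iff_mul_le hB]
    calc C * (1 / (B * C)) * B = B * C * (1 / (B * C)) := by ring
      _ ≤ 1 := FractionalIdeal.mul_one_div_le_one
  have h1 : B * C * (1 / (B * C)) ≠ 0 := fi_mul_ne_zero hBC (fi_one_div_ne_zero hBC)
  have h2 : B * (1 / B) ≠ 0 := fi_mul_ne_zero hB (fi_one_div_ne_zero hB)
  refine le_antisymm ?_ ?_
  · calc 1 / (B * (1 / B)) ≤ 1 / (B * C * (1 / (B * C))) := fi_one_div_le_one_div h1 hkey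
      _ = 1 := h
  · exact fi_one_le_one_div h2 FractionalIdeal.mul_one_div_le_one

/-- If `1/E = 1/F = 1` with `E, F` nonzero and `≤ 1`, then `1/(E*F) = 1`. -/
private lemma one_div_mul_eq_one {E F : FractionalIdeal (nonZeroDivisors D) K}
    (hE : E ≠ 0) (hF : F ≠ 0) (hE1 : E ≤ 1) (hF1 : F ≤ 1)
    (hE' : 1 / E = 1) (hF' : 1 / F = 1) : 1 / (E * F) = 1 := by
  have hEF : E * F ≠ 0 := fi_mul_ne_zero hE hF
  refine le_antisymm ?_ ?_
  · have step1 : 1 / (E * F) * E ≤ 1 / F := by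
      rw [FractionalIdeal.le_div_iff_mul_le hF, mul_assoc]
      calc 1 / (E * F) * (E * F) = (E * F) * (1 / (E * F)) := mul_comm _ _
        _ ≤ 1 := FractionalIdeal.mul_one_div_le_one
    have step2 : 1 / (E * F) ≤ 1 / E := by
      rw [FractionalIdeal.le_div_iff_mul_le hE]
      calc 1 / (E * F) * E ≤ 1 / F := step1
        _ = 1 := hF'
    rw [hE'] at step2
    exact step2
  · refine fi_one_le_one_div hEF ?_
    calc E * F ≤ 1 * 1 :=
      le_trans (mul_le_mul_left hE1 F) (mul_le_mul_right hF1 1)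
      _ = 1 := one_mul 1

/-- v-invertibility (in `1/` form) of a product of two nonzero v-invertibles. -/
private lemma vinv_mul {B C : FractionalIdeal (nonZeroDivisors D) K}
    (hB : B ≠ 0) (hC : C ≠ 0) (hBv : 1 / (B * (1 / B)) = 1) (hCv : 1 / (C * (1 / C)) = 1) :
    1 / (B * C * (1 / (B * C))) = 1 := by
  have hBC : B * C ≠ 0 := fi_mul_ne_zero hB hC
  have hE : B * (1 / B) ≠ 0 := fi_mul_ne_zero hB (fi_one_div_ne_zero hB)
  have hF : C * (1 / C) ≠ 0 := fi_mul_ne_zero hC (fi_one_div_ne_zero hC)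
  have hle : (B * (1 / B)) * (C * (1 / C)) ≤ B * C * (1 / (B * C)) := by
    have hinv : (1 / B) * (1 / C) ≤ 1 / (B * C) := by
      rw [FractionalIdeal.le_div_iff_mul_le hBC]
      calc 1 / B * (1 / C) * (B * C) = (B * (1 / B)) * (C * (1 / C)) := by ring
        _ ≤ 1 * (C * (1 / C)) := mul_le_mul_left
            FractionalIdeal.mul_one_div_le_one _
        _ = C * (1 / C) := one_mul _
        _ ≤ 1 := FractionalIdeal.mul_one_div_le_one
    calc (B * (1 / B)) * (C * (1 / C)) = (B * C) * ((1 / B) * (1 / C)) := by ring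
      _ ≤ (B * C) * (1 / (B * C)) := mul_le_mul_right hinv _
  refine le_antisymm ?_ ?_
  · calc 1 / (B * C * (1 / (B * C))) ≤ 1 / ((B * (1 / B)) * (C * (1 / C))) :=
        fi_one_div_le_one_div (fi_mul_ne_zero hE hF) hle
      _ = 1 := one_div_mul_eq_one hE hF FractionalIdeal.mul_one_div_le_one
          FractionalIdeal.mul_one_div_le_one hBv hCv
  · exact fi_one_le_one_div (fi_mul_ne_zero hBC (fi_one_div_ne_zero hBC))
      FractionalIdeal.mul_one_div_le_one

private lemma fi_eq_zero_of_le_zero {X : FractionalIdeal (nonZeroDivisors D) K}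
    (h : X ≤ 0) : X = 0 := le_antisymm h (zero_le _)

private lemma fi_le_add_left (X Y : FractionalIdeal (nonZeroDivisors D) K) : X ≤ X + Y := by
  rw [← FractionalIdeal.sup_eq_add]; exact le_sup_left

private lemma fi_le_add_right (X Y : FractionalIdeal (nonZeroDivisors D) K) : Y ≤ X + Y := by
  rw [← FractionalIdeal.sup_eq_add]; exact le_sup_right

private lemma fi_add_eq_zero {X Y : FractionalIdeal (nonZeroDivisors D) K}
    (h : X + Y = 0) : X = 0 ∧ Y = 0 :=
  ⟨fi_eq_zero_of_le_zero (h ▸ fi_le_add_left X Y),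
   fi_eq_zero_of_le_zero (h ▸ fi_le_add_right X Y)⟩

private lemma fi_mul_le_mul {A B C E : FractionalIdeal (nonZeroDivisors D) K}
    (h1 : A ≤ B) (h2 : C ≤ E) : A * C ≤ B * E :=
  le_trans (mul_le_mul_left h1 C) (mul_le_mul_right h2 B)

/-- The three-ideal identity. -/
private lemma three_identity (X Y Z : FractionalIdeal (nonZeroDivisors D) K) :
    (X + Y) * (X + Z) * (Y + Z) = (X + Y + Z) * (X * Y + X * Z + Y * Z) := by
  have h : X * Z * Y ≤ (X + Y) * (X + Z) * (Y + Z) :=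
    fi_mul_le_mul (fi_mul_le_mul (fi_le_add_left X Y) (fi_le_add_right X Z))
      (fi_le_add_left Y Z)
  calc (X + Y) * (X + Z) * (Y + Z)
      = (X + Y) * (X + Z) * (Y + Z) + X * Z * Y := by
        rw [← FractionalIdeal.sup_eq_add ((X + Y) * (X + Z) * (Y + Z)) (X * Z * Y),
          sup_eq_left.mpr h]
    _ = (X + Y + Z) * (X * Y + X * Z + Y * Z) := by ring

private lemma coe_sum_spanSingleton (s : Finset K) :
    ((∑ x ∈ s, spanSingleton (nonZeroDivisors D) x :
        FractionalIdeal (nonZeroDivisors D) K) : Submodule D K) = Submodule.span D ↑s := by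
  classical
  induction s using Finset.induction_on with
  | empty => simp
  | insert _ _ hat ih =>
    rw [Finset.sum_insert hat, FractionalIdeal.coe_add, FractionalIdeal.coe_spanSingleton,
      Finset.coe_insert, Submodule.span_insert, ih, Submodule.add_eq_sup]

private lemma key_finset
    (h2 : ∀ x y : K,
        spanSingleton (nonZeroDivisors D) x + spanSingleton (nonZeroDivisors D) y ≠ 0 →
        IsVInvertible
          (spanSingleton (nonZeroDivisors D) x + spanSingleton (nonZeroDivisors D) y)) :
    ∀ s : Finset K, (∑ x ∈ s, spanSingleton (nonZeroDivisors D) x) ≠ 0 →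
      IsVInvertible (∑ x ∈ s, spanSingleton (nonZeroDivisors D) x) := by
  classical
  have hsingle : ∀ x : K, spanSingleton (nonZeroDivisors D) x ≠ 0 →
      IsVInvertible (spanSingleton (nonZeroDivisors D) x) := by
    intro x hx
    have h := h2 x 0 (by simpa using hx)
    simpa using h
  intro s
  induction s using Finset.strongInduction with
  | _ s ih =>
    intro hs
    rcases Finset.eq_empty_or_nonempty s with rfl | ⟨a, ha⟩
    · simp at hs
    set X := spanSingleton (nonZeroDivisors D) a with hX
    set t := s.erase a with htdef
    have hat : a ∉ t := Finset.notMem_erase a s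
    have hsa : s = insert a t := (Finset.insert_erase ha).symm
    have hts : t ⊂ s := Finset.erase_ssubset ha
    have hSs : (∑ x ∈ s, spanSingleton (nonZeroDivisors D) x) =
        X + ∑ x ∈ t, spanSingleton (nonZeroDivisors D) x := by
      rw [hsa, Finset.sum_insert hat]
    rcases Finset.eq_empty_or_nonempty t with ht0 | ⟨b, hb⟩
    · rw [ht0, Finset.sum_empty, add_zero] at hSs
      rw [hSs] at hs ⊢
      exact hsingle a hs
    set Y := spanSingleton (nonZeroDivisors D) b with hY
    set w := t.erase b with hwdef
    have hbw : b ∉ w := Finset.notMem_erase b t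
    have htb : t = insert b w := (Finset.insert_erase hb).symm
    have haw : a ∉ w := fun h => hat (Finset.erase_subset b t h)
    have hab : a ≠ b := fun h => hat (h ▸ hb)
    set Z := (∑ x ∈ w, spanSingleton (nonZeroDivisors D) x) with hZ
    have hSt : (∑ x ∈ t, spanSingleton (nonZeroDivisors D) x) = Y + Z := by
      rw [htb, Finset.sum_insert hbw]
    have hA : (∑ x ∈ s, spanSingleton (nonZeroDivisors D) x) = X + (Y + Z) := by
      rw [hSs, hSt]
    rw [hA] at hs ⊢
    by_cases hXY : X + Y = 0
    · obtain ⟨hX0, hY0⟩ := fi_add_eq_zero hXY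
      rw [hX0, hY0, zero_add, zero_add] at hs ⊢
      have hws : w ⊂ s := ssubset_of_subset_of_ssubset (Finset.erase_subset b t) hts
      exact ih w hws hs
    by_cases hXZ : X + Z = 0
    · obtain ⟨hX0, hZ0⟩ := fi_add_eq_zero hXZ
      rw [hX0, hZ0, zero_add, add_zero] at hs ⊢
      exact hsingle b hs
    by_cases hYZ : Y + Z = 0
    · obtain ⟨hY0, hZ0⟩ := fi_add_eq_zero hYZ
      rw [hY0, hZ0, zero_add, add_zero] at hs ⊢
      exact hsingle a hs
    have v1 : 1 / ((X + Y) * (1 / (X + Y))) = 1 := (vinv_iff _).mp (h2 a b hXY)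
    have v2 : 1 / ((X + Z) * (1 / (X + Z))) = 1 := by
      have hsub : insert a w ⊂ s := by
        refine (Finset.ssubset_iff_of_subset ?_).mpr ⟨b, ?_, ?_⟩
        · intro x hx
          rcases Finset.mem_insert.mp hx with rfl | hx
          · exact ha
          · exact hts.subset (Finset.erase_subset b t hx)
        · rw [hsa, htb]; exact Finset.mem_insert_of_mem (Finset.mem_insert_self b w)
        · rw [Finset.mem_insert]; push_neg; exact ⟨fun h => hab h.symm, hbw⟩
      have hSaw : (∑ x ∈ insert a w, spanSingleton (nonZeroDivisors D) x) = X + Z := by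
        rw [Finset.sum_insert haw]
      have hv := ih (insert a w) hsub (by rw [hSaw]; exact hXZ)
      rw [hSaw] at hv
      exact (vinv_iff _).mp hv
    have v3 : 1 / ((Y + Z) * (1 / (Y + Z))) = 1 := by
      have hv := ih t hts (by rw [hSt]; exact hYZ)
      rw [hSt] at hv
      exact (vinv_iff _).mp hv
    have hXYZ : (X + Y) * (X + Z) ≠ 0 := fi_mul_ne_zero hXY hXZ
    have v12 : 1 / ((X + Y) * (X + Z) * (1 / ((X + Y) * (X + Z)))) = 1 :=
      vinv_mul hXY hXZ v1 v2
    have v123 : 1 / ((X + Y) * (X + Z) * (Y + Z) *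
        (1 / ((X + Y) * (X + Z) * (Y + Z)))) = 1 :=
      vinv_mul hXYZ hYZ v12 v3
    rw [three_identity X Y Z] at v123
    have hAne : X + Y + Z ≠ 0 := by rwa [add_assoc]
    have hQne : X * Y + X * Z + Y * Z ≠ 0 := by
      by_cases hX0 : X = 0
      · have hYne : Y ≠ 0 := fun h => hXY (by rw [hX0, h, add_zero])
        have hZne : Z ≠ 0 := fun h => hXZ (by rw [hX0, h, add_zero])
        intro h
        obtain ⟨-, hYZ0⟩ := fi_add_eq_zero h
        exact fi_mul_ne_zero hYne hZne hYZ0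
      · by_cases hY0 : Y = 0
        · have hZne : Z ≠ 0 := fun h => hYZ (by rw [hY0, h, zero_add])
          intro h
          obtain ⟨h', -⟩ := fi_add_eq_zero h
          obtain ⟨-, hXZ0⟩ := fi_add_eq_zero h'
          exact fi_mul_ne_zero hX0 hZne hXZ0
        · intro h
          obtain ⟨h', -⟩ := fi_add_eq_zero h
          obtain ⟨hXY0, -⟩ := fi_add_eq_zero h'
          exact fi_mul_ne_zero hX0 hY0 hXY0
    have hfin := vinv_of_factor hAne hQne v123
    refine (vinv_iff _).mpr ?_
    rwa [add_assoc] at hfin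

/-- `D` is a `v`-domain iff every nonzero two-generated fractional ideal is
`v`-invertible. -/
theorem vDomain_iff_twoGenerated_vInvertible :
    (∀ F : FractionalIdeal (nonZeroDivisors D) K, F ≠ 0 → (F : Submodule D K).FG →
        IsVInvertible F) ↔
      ∀ x y : K,
        spanSingleton (nonZeroDivisors D) x + spanSingleton (nonZeroDivisors D) y ≠ 0 →
        IsVInvertible
          (spanSingleton (nonZeroDivisors D) x + spanSingleton (nonZeroDivisors D) y) := by
  constructor
  · intro h x y hxy
    refine h _ hxy ?_
    have hcoe : ((spanSingleton (nonZeroDivisors D) x + spanSingleton (nonZeroDivisors D) y :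
        FractionalIdeal (nonZeroDivisors D) K) : Submodule D K) =
        Submodule.span D ({x, y} : Set K) := by
      rw [FractionalIdeal.coe_add, FractionalIdeal.coe_spanSingleton,
        FractionalIdeal.coe_spanSingleton, Submodule.span_insert, Submodule.add_eq_sup]
    rw [hcoe]
    exact Submodule.fg_span ((Set.finite_singleton y).insert x)
  · intro h2 F hF hFG
    obtain ⟨s, hs⟩ := hFG
    have hFs : F = ∑ x ∈ s, spanSingleton (nonZeroDivisors D) x := by
      apply FractionalIdeal.coeToSubmodule_injective
      show (F : Submodule D K) = ((∑ x ∈ s, spanSingleton (nonZeroDivisors D) x :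
        FractionalIdeal (nonZeroDivisors D) K) : Submodule D K)
      rw [coe_sum_spanSingleton, hs]
    rw [hFs] at hF ⊢
    exact key_finset h2 s hF
end

section
/- Let D be a v-domain and T an overring of D that is v-linked over D (i.e., for every nonzero ideal I of D with I⁻¹ = D one has (IT)⁻¹ = T). Then T is a v-domain. -/
open FractionalIdeal

section Helpers
variable {R₁ : Type*} [CommRing R₁] [IsDomain R₁] {K : Type*} [Field K] [Algebra R₁ K]
  [IsFractionRing R₁ K]

theorem my_one_div_ne_zero {A : FractionalIdeal (nonZeroDivisors R₁) K} (hA : A ≠ 0) :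
    (1 : FractionalIdeal (nonZeroDivisors R₁) K) / A ≠ 0 := by
  obtain ⟨b, hb, hbA⟩ := A.isFractional
  have hbK : algebraMap R₁ K b ≠ 0 :=
    fun h => mem_nonZeroDivisors_iff_ne_zero.mp hb (IsFractionRing.to_map_eq_zero_iff.mp h)
  have hmem : algebraMap R₁ K b ∈ (1 : FractionalIdeal (nonZeroDivisors R₁) K) / A := by
    rw [mem_div_iff_of_ne_zero hA]
    intro y hy
    obtain ⟨a, ha⟩ := hbA y hy
    exact (mem_one_iff _).mpr ⟨a, by rw [ha, Algebra.smul_def]⟩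
  intro h
  rw [h, mem_zero_iff] at hmem
  exact hbK hmem

theorem my_div_antitone {A B : FractionalIdeal (nonZeroDivisors R₁) K} (hA : A ≠ 0) (h : A ≤ B) :
    1 / B ≤ 1 / A := by
  have hB : B ≠ 0 := fun hB => hA (le_antisymm (hB ▸ h) (zero_le _))
  rw [le_div_iff_mul_le hA]
  exact mul_le.mpr fun x hx y hy => (mem_div_iff_of_ne_zero hB).mp hx y (h hy)

theorem my_le_one_div_one_div {A : FractionalIdeal (nonZeroDivisors R₁) K} (hA : A ≠ 0) :
    A ≤ 1 / (1 / A) := by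
  rw [le_div_iff_mul_le (my_one_div_ne_zero hA)]
  exact mul_one_div_le_one

theorem my_triple_div (A : FractionalIdeal (nonZeroDivisors R₁) K) :
    1 / (1 / (1 / A)) = 1 / A := by
  by_cases hA : A = 0
  · rw [hA, FractionalIdeal.div_zero, FractionalIdeal.div_zero, FractionalIdeal.div_zero]
  exact le_antisymm (my_div_antitone hA (my_le_one_div_one_div hA))
    (my_le_one_div_one_div (my_one_div_ne_zero hA))

omit [IsDomain R₁] in
theorem my_sing_mul_ne_zero {F : FractionalIdeal (nonZeroDivisors R₁) K} (hF : F ≠ 0) {e : K}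
    (he : e ≠ 0) : spanSingleton (nonZeroDivisors R₁) e * F ≠ 0 := by
  intro h0
  apply hF
  have h1 : spanSingleton (nonZeroDivisors R₁) e⁻¹ *
      (spanSingleton (nonZeroDivisors R₁) e * F) = 0 := by rw [h0, mul_zero]
  rwa [← mul_assoc, spanSingleton_mul_spanSingleton, inv_mul_cancel₀ he, spanSingleton_one,
    one_mul] at h1

theorem my_le_scaled {F : FractionalIdeal (nonZeroDivisors R₁) K} (hF : F ≠ 0) {e : K}
    (he : e ≠ 0) :
    F * (1 / F) ≤ (spanSingleton (nonZeroDivisors R₁) e * F) *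
      (1 / (spanSingleton (nonZeroDivisors R₁) e * F)) := by
  have heF : spanSingleton (nonZeroDivisors R₁) e * F ≠ 0 := my_sing_mul_ne_zero hF he
  refine mul_le.mpr fun m hm n hn => ?_
  have h1 : e * m ∈ spanSingleton (nonZeroDivisors R₁) e * F :=
    mul_mem_mul (mem_spanSingleton_self _ _) hm
  have h2 : e⁻¹ * n ∈ 1 / (spanSingleton (nonZeroDivisors R₁) e * F) := by
    rw [mem_div_iff_of_ne_zero heF]
    intro z hz
    obtain ⟨w, hw, rfl⟩ := mem_singleton_mul.mp hz
    have : e⁻¹ * n * (e * w) = n * w := by field_simp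
    rw [this]
    exact (mem_div_iff_of_ne_zero hF).mp hn w hw
  have := mul_mem_mul h1 h2
  have heq : e * m * (e⁻¹ * n) = m * n := by field_simp
  rwa [heq] at this

theorem my_scaled_eq {F : FractionalIdeal (nonZeroDivisors R₁) K} (hF : F ≠ 0) {e : K}
    (he : e ≠ 0) :
    (spanSingleton (nonZeroDivisors R₁) e * F) *
      (1 / (spanSingleton (nonZeroDivisors R₁) e * F)) = F * (1 / F) := by
  refine le_antisymm ?_ (my_le_scaled hF he)
  have heF : spanSingleton (nonZeroDivisors R₁) e * F ≠ 0 := my_sing_mul_ne_zero hF he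
  have := my_le_scaled heF (inv_ne_zero he)
  have hrw : spanSingleton (nonZeroDivisors R₁) e⁻¹ *
      (spanSingleton (nonZeroDivisors R₁) e * F) = F := by
    rw [← mul_assoc, spanSingleton_mul_spanSingleton, inv_mul_cancel₀ he, spanSingleton_one,
      one_mul]
  rwa [hrw] at this

end Helpers

variable {D K : Type*} [CommRing D] [IsDomain D] [Field K] [Algebra D K] [IsFractionRing D K]

/-- `R` is a `v`-domain: every nonzero finitely generated fractional ideal `F` satisfies
`(F·F⁻¹)^v = R`. -/
noncomputable def IsVDomain (R K : Type*) [CommRing R] [IsDomain R] [Field K] [Algebra R K]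
    [IsFractionRing R K] : Prop :=
  ∀ F : FractionalIdeal (nonZeroDivisors R) K, F ≠ 0 → (F : Submodule R K).FG →
    1 / (1 / (F * (1 / F))) = 1

set_option maxHeartbeats 1000000
set_option synthInstance.maxHeartbeats 400000

/-- A `v`-linked overring of a `v`-domain is a `v`-domain. -/
theorem vLinked_overring_of_vDomain (hD : IsVDomain D K) (T : Subalgebra D K)
    [IsFractionRing T K]
    (hlink : ∀ I : Ideal D, I ≠ ⊥ →
      1 / ((I : FractionalIdeal (nonZeroDivisors D) K)) = 1 →
      1 / ((Ideal.map (algebraMap D T) I : Ideal T) :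
        FractionalIdeal (nonZeroDivisors T) K) = 1) :
    IsVDomain T K := by
  intro F hF hFG
  suffices key : 1 / (F * (1 / F)) = 1 by rw [key]; exact FractionalIdeal.div_one
  -- generators of F
  obtain ⟨s, hs⟩ := hFG
  -- common denominator
  obtain ⟨b, hb⟩ := IsLocalization.exist_integer_multiples_of_finset (nonZeroDivisors D) s
  set dK : K := algebraMap D K (b : D) with hdKdef
  have hdK : dK ≠ 0 := fun h =>
    mem_nonZeroDivisors_iff_ne_zero.mp b.2 (IsFractionRing.to_map_eq_zero_iff.mp h)
  -- the D-submodule generated by dK • s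
  set W : Submodule D K := Submodule.span D ((fun x => dK * x) '' ↑s) with hWdef
  have hWle : W ≤ LinearMap.range (Algebra.linearMap D K) := by
    rw [hWdef, Submodule.span_le]
    rintro _ ⟨x, hx, rfl⟩
    obtain ⟨a, ha⟩ := hb x hx
    exact ⟨a, by rw [Algebra.linearMap_apply, ha, Algebra.smul_def]⟩
  set I₀ : Ideal D := W.comap (Algebra.linearMap D K) with hI₀def
  set I : FractionalIdeal (nonZeroDivisors D) K := (I₀ : FractionalIdeal (nonZeroDivisors D) K)
    with hIdef
  have hIW : (I : Submodule D K) = W := by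
    rw [hIdef, coe_coeIdeal, IsLocalization.coeSubmodule, hI₀def, Submodule.map_comap_eq,
      inf_eq_right.mpr hWle]
  -- I is nonzero
  have hsx : ∃ x ∈ s, x ≠ 0 := by
    by_contra h
    push_neg at h
    apply hF
    rw [← coeToSubmodule_eq_bot, ← hs, Submodule.span_eq_bot]
    exact fun x hx => h x hx
  obtain ⟨x₀, hx₀s, hx₀⟩ := hsx
  have hInz : I ≠ 0 := by
    rw [Ne, ← coeToSubmodule_eq_bot, hIW]
    intro hWbot
    have : dK * x₀ ∈ W := Submodule.subset_span ⟨x₀, hx₀s, rfl⟩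
    rw [hWbot, Submodule.mem_bot] at this
    exact mul_ne_zero hdK hx₀ this
  have hIfg : (I : Submodule D K).FG := by
    rw [hIW, hWdef]
    exact Submodule.fg_span ((s.finite_toSet.image _))
  -- apply the v-domain hypothesis
  have hv := hD I hInz hIfg
  have hI1 : 1 / (I * (1 / I)) = 1 := by
    calc 1 / (I * (1 / I)) = 1 / (1 / (1 / (I * (1 / I)))) := (my_triple_div _).symm
      _ = 1 / 1 := by rw [hv]
      _ = 1 := FractionalIdeal.div_one
  obtain ⟨J₀, hJ₀⟩ := le_one_iff_exists_coeIdeal.mp (mul_one_div_le_one (I := I))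
  have hJ₀ne : J₀ ≠ ⊥ := by
    intro h
    rw [h, coeIdeal_bot] at hJ₀
    rw [← hJ₀, FractionalIdeal.div_zero] at hI1
    exact zero_ne_one hI1
  have hlinkJ := hlink J₀ hJ₀ne (by rw [hJ₀]; exact hI1)
  -- the scaled fractional ideal F' over T
  set F' : FractionalIdeal (nonZeroDivisors T) K := spanSingleton (nonZeroDivisors T) dK * F
    with hF'def
  have hF'nz : F' ≠ 0 := my_sing_mul_ne_zero hF hdK
  -- W sits inside F'
  have hWF' : ∀ w ∈ W, w ∈ F' := by
    intro w hw
    have : W ≤ Submodule.restrictScalars D (F' : Submodule T K) := by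
      rw [hWdef, Submodule.span_le]
      rintro _ ⟨x, hx, rfl⟩
      exact mul_mem_mul (mem_spanSingleton_self _ _) (by rw [← mem_coe, ← hs]; exact Submodule.subset_span hx)
    exact this hw
  -- the key inclusion
  have hkey : ((Ideal.map (algebraMap D T) J₀ : Ideal T) :
      FractionalIdeal (nonZeroDivisors T) K) ≤ F' * (1 / F') := by
    -- reduce to elements of J₀
    have helt : ∀ a ∈ J₀, algebraMap D K a ∈ F' * (1 / F') := by
      intro a ha
      have haI : algebraMap D K a ∈ (I * (1 / I) : FractionalIdeal (nonZeroDivisors D) K) := by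
        rw [← hJ₀]
        exact (mem_coeIdeal _).mpr ⟨a, ha, rfl⟩
      have haI' : algebraMap D K a ∈ ((I : Submodule D K) *
          ((1 / I : FractionalIdeal (nonZeroDivisors D) K) : Submodule D K)) := by
        rwa [← coe_mul]
      rw [← mem_coe, coe_mul]
      refine Submodule.mul_induction_on haI' (fun m hm n hn => ?_)
        (fun y z hy hz => Submodule.add_mem _ hy hz)
      -- m ∈ W ⊆ F', n ∈ (1/I over D) ⊆ (1/F' over T)
      rw [hIW] at hm
      have hmF' : m ∈ F' := hWF' m hm
      have hnF' : n ∈ (1 / F' : FractionalIdeal (nonZeroDivisors T) K) := by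
        rw [mem_div_iff_of_ne_zero hF'nz]
        intro z hz
        obtain ⟨w, hw, rfl⟩ := mem_singleton_mul.mp hz
        -- w ∈ F = span T s; reduce by span induction via a comap submodule
        have hsw : (Submodule.span T (↑s : Set K)) ≤
            Submodule.comap (LinearMap.mulLeft T (n * dK))
              ((1 : FractionalIdeal (nonZeroDivisors T) K) : Submodule T K) := by
          rw [Submodule.span_le]
          intro x hx
          have hdx : dK * x ∈ W := Submodule.subset_span ⟨x, hx, rfl⟩
          have h1D : n * (dK * x) ∈ (1 : FractionalIdeal (nonZeroDivisors D) K) := by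
            have hn' : n ∈ ((1 : FractionalIdeal (nonZeroDivisors D) K) /
                I : FractionalIdeal (nonZeroDivisors D) K) := hn
            rw [mem_div_iff_of_ne_zero hInz] at hn'
            exact hn' _ (mem_coe.mp (show dK * x ∈ (I : Submodule D K) from hIW.symm ▸ hdx))
          obtain ⟨c, hc⟩ := (mem_one_iff _).mp h1D
          rw [SetLike.mem_coe, Submodule.mem_comap, LinearMap.mulLeft_apply]
          refine mem_coe.mpr ((mem_one_iff _).mpr ⟨algebraMap D T c, ?_⟩)
          rw [← IsScalarTower.algebraMap_apply D T K, hc, mul_assoc]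
        have hwmem : w ∈ Submodule.span T (↑s : Set K) := by rw [hs]; exact hw
        have := hsw hwmem
        rw [Submodule.mem_comap, LinearMap.mulLeft_apply] at this
        have heq : n * (dK * w) = n * dK * w := by ring
        rw [heq]
        exact this
      exact Submodule.mul_mem_mul (mem_coe.mpr hmF') (mem_coe.mpr hnF')
    -- now lift to the coeIdeal
    rw [SetLike.le_def]
    intro x hx
    obtain ⟨t, ht, rfl⟩ := (mem_coeIdeal _).mp hx
    rw [Ideal.map, ← Ideal.submodule_span_eq] at ht
    refine Submodule.span_induction (fun y hy => ?_) ?_ (fun y z _ _ hy hz => ?_)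
      (fun c y _ hy => ?_) ht
    · obtain ⟨a, ha, rfl⟩ := hy
      have : algebraMap T K (algebraMap D T a) = algebraMap D K a :=
        (IsScalarTower.algebraMap_apply D T K a).symm
      rw [this]
      exact helt a ha
    · rw [_root_.map_zero]; exact zero_mem _
    · rw [_root_.map_add]
      exact mem_coe.mp (Submodule.add_mem _ (mem_coe.mpr hy) (mem_coe.mpr hz))
    · rw [smul_eq_mul, _root_.map_mul]
      have : (algebraMap T K c) * (algebraMap T K y) = c • (algebraMap T K y) := by
        rw [Algebra.smul_def]
      rw [this]
      exact Submodule.smul_mem _ c hy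
  -- finish
  have hmapne : ((Ideal.map (algebraMap D T) J₀ : Ideal T) :
      FractionalIdeal (nonZeroDivisors T) K) ≠ 0 := by
    intro h
    rw [h, FractionalIdeal.div_zero] at hlinkJ
    exact zero_ne_one hlinkJ
  have hFF'nz : F' * (1 / F') ≠ 0 := fun h => hmapne (le_antisymm (h ▸ hkey) (zero_le _))
  have key' : 1 / (F' * (1 / F')) = 1 :=
    le_antisymm (le_trans (my_div_antitone hmapne hkey) (le_of_eq hlinkJ))
      (by rw [le_div_iff_mul_le hFF'nz, one_mul]; exact mul_one_div_le_one)
  rw [← my_scaled_eq hF hdK]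
  exact key'
end
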